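/- There exists no (r,c)-circulant with c ≡ 2 (mod 3); that is, for every n ≥ 1, every jump set S ⊆ {1, …, ⌊n/2⌋} in Z_n, and every vertex v of Circ(n, S), the number e(v) of edges induced by the open neighbourhood of v is not congruent to 2 modulo 3. -/

import Mathlib

private lemma card_modEq_of_triple {α : Type*} [DecidableEq α] (f : α → α) :
    ∀ s : Finset α, (∀ x ∈ s, f x ∈ s) → (∀ x ∈ s, f (f (f x)) = x) →
      s.card % 3 = (s.filter fun x => f x = x).card % 3 := by
  intro s
  induction s using Finset.strongInduction with
  | _ s ih =>
    intro hmap hcube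
    by_cases hall : ∀ x ∈ s, f x = x
    · rw [Finset.filter_true_of_mem hall]
    · push_neg at hall
      obtain ⟨x, hx, hfx⟩ := hall
      have hx1 : f x ∈ s := hmap x hx
      have hx2 : f (f x) ∈ s := hmap _ hx1
      have hcx : f (f (f x)) = x := hcube x hx
      have h01 : x ≠ f x := fun h => hfx h.symm
      have h12 : f x ≠ f (f x) := by
        intro h
        have h2 : f (f x) = x := (congrArg f h).trans hcx
        exact hfx (h.trans h2)
      have h02 : x ≠ f (f x) := by
        intro h
        exact hfx ((congrArg f h).trans hcx)
      set t : Finset α := {x, f x, f (f x)} with ht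
      have htcard : t.card = 3 := by
        rw [ht, Finset.card_insert_of_notMem (by simp [h01, h02]),
          Finset.card_insert_of_notMem (by simp [h12]), Finset.card_singleton]
      have hts : t ⊆ s := by
        rw [ht]
        intro y hy
        simp only [Finset.mem_insert, Finset.mem_singleton] at hy
        rcases hy with rfl | rfl | rfl <;> assumption
      have hss : s \ t ⊂ s := Finset.sdiff_ssubset hts ⟨x, by simp [ht]⟩
      have hmap' : ∀ y ∈ s \ t, f y ∈ s \ t := by
        intro y hy
        rw [Finset.mem_sdiff] at hy ⊢
        refine ⟨hmap y hy.1, ?_⟩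
        intro hmem
        have hyc : f (f (f y)) = y := hcube y hy.1
        rw [ht] at hmem
        simp only [Finset.mem_insert, Finset.mem_singleton] at hmem
        rcases hmem with h | h | h
        · have : y = f (f x) := by rw [← hyc, h]
          exact hy.2 (by rw [this, ht]; simp)
        · have : y = x := by rw [← hyc, h, hcx]
          exact hy.2 (by rw [this, ht]; simp)
        · have : y = f x := by rw [← hyc, h]; exact hcube _ hx1
          exact hy.2 (by rw [this, ht]; simp)
      have hc1 : s.card = (s \ t).card + 3 := by
        have := Finset.card_sdiff_of_subset hts
        have := Finset.card_le_card hts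
        omega
      have hfe : s.filter (fun z => f z = z) = (s \ t).filter (fun z => f z = z) := by
        ext z
        simp only [Finset.mem_filter, Finset.mem_sdiff, ht, Finset.mem_insert,
          Finset.mem_singleton]
        constructor
        · rintro ⟨hz, hfz⟩
          refine ⟨⟨hz, ?_⟩, hfz⟩
          rintro (rfl | rfl | rfl)
          · exact hfx hfz
          · exact h12 hfz.symm
          · exact h02 (hcx.symm.trans hfz)
        · rintro ⟨⟨hz, _⟩, hfz⟩
          exact ⟨hz, hfz⟩
      calc s.card % 3 = ((s \ t).card + 3) % 3 := by rw [hc1]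
        _ = (s \ t).card % 3 := by omega
        _ = ((s \ t).filter (fun z => f z = z)).card % 3 :=
            ih (s \ t) hss hmap' (fun y hy => hcube y (Finset.mem_sdiff.mp hy).1)
        _ = _ := by rw [hfe]



/-- The circulant graph `Circ(n, S)`: vertices are `ZMod n`, and distinct
vertices `x, y` are adjacent iff `x - y ∈ S ∪ (-S)`. -/
def Circulant (n : ℕ) (S : Set (ZMod n)) : SimpleGraph (ZMod n) where
  Adj x y := x ≠ y ∧ x - y ∈ S ∪ -S
  symm := by
    constructor
    rintro x y ⟨hxy, h⟩
    refine ⟨hxy.symm, ?_⟩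
    have hyx : y - x = -(x - y) := by ring
    rw [hyx]
    rcases h with h | h
    · exact Or.inr (Set.neg_mem_neg.mpr h)
    · exact Or.inl (Set.mem_neg.mp h)
  loopless := ⟨fun x h => h.1 rfl⟩

/-- The number of edges of the subgraph of `G` induced by the open
neighbourhood of the vertex `v` (the quantity `e(v)`). -/
noncomputable def nbhdEdgeCount {V : Type*} (G : SimpleGraph V) (v : V) : ℕ :=
  Nat.card (SimpleGraph.induce (G.neighborSet v) G).edgeSet

/-- No `(r,c)`-circulant exists with `c ≡ 2 (mod 3)`: for every `n ≥ 1`,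
every jump set `S ⊆ {1, …, ⌊n/2⌋}` and every vertex `v` of `Circ(n, S)`,
the number `e(v)` is not congruent to `2` modulo `3`. -/
theorem circulant_nbhdEdgeCount_mod_three_ne_two (n : ℕ) (hn : 1 ≤ n) (S : Set (ZMod n))
    (hS : ∀ s ∈ S, 1 ≤ s.val ∧ s.val ≤ n / 2) (v : ZMod n) :
    nbhdEdgeCount (Circulant n S) v % 3 ≠ 2 := by
  classical
  haveI : NeZero n := ⟨by omega⟩
  set G := Circulant n S with hGdef
  have hAdj : ∀ x y : ZMod n, G.Adj x y ↔ x ≠ y ∧ x - y ∈ S ∪ -S := fun _ _ => Iff.rfl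
  have hneg : ∀ a : ZMod n, a ∈ S ∪ -S → -a ∈ S ∪ -S := by
    intro a ha
    rcases ha with h | h
    · exact Or.inr (Set.neg_mem_neg.mpr h)
    · exact Or.inl (Set.mem_neg.mp h)
  -- the set of ordered pairs of adjacent neighbours of `v`
  set P : Finset (ZMod n × ZMod n) :=
    Finset.univ.filter (fun p => G.Adj v p.1 ∧ G.Adj v p.2 ∧ G.Adj p.1 p.2) with hPdef
  have hPmem : ∀ x y : ZMod n, (x, y) ∈ P ↔ G.Adj v x ∧ G.Adj v y ∧ G.Adj x y := by
    intro x y; simp [hPdef]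
  -- relate `nbhdEdgeCount` to `P.card` via darts of the induced graph
  set G' := SimpleGraph.induce (G.neighborSet v) G with hG'def
  have hequiv : G'.Dart ≃ {p : ZMod n × ZMod n // p ∈ P} :=
    { toFun := fun d => ⟨(d.fst.1, d.snd.1),
        (hPmem d.fst.1 d.snd.1).mpr ⟨d.fst.2, d.snd.2, d.adj⟩⟩
      invFun := fun p =>
        ⟨(⟨p.1.1, ((hPmem p.1.1 p.1.2).mp p.2).1⟩, ⟨p.1.2, ((hPmem p.1.1 p.1.2).mp p.2).2.1⟩),
          ((hPmem p.1.1 p.1.2).mp p.2).2.2⟩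
      left_inv := fun d => rfl
      right_inv := fun p => rfl }
  have hPcard : P.card = 2 * nbhdEdgeCount G v := by
    have h1 : Nat.card {p : ZMod n × ZMod n // p ∈ P} = P.card := by
      rw [Nat.card_eq_fintype_card]; exact Fintype.card_coe P
    have h2 : nbhdEdgeCount G v = Nat.card G'.edgeSet := rfl
    rw [← h1, ← Nat.card_congr hequiv, h2, Nat.card_eq_fintype_card,
      SimpleGraph.dart_card_eq_twice_card_edges, SimpleGraph.edgeFinset_card,
      Nat.card_eq_fintype_card]
  -- the 3-cycle map on ordered pairs
  set f : ZMod n × ZMod n → ZMod n × ZMod n := fun p => (p.2 - p.1 + v, 2*v - p.1) with hfdef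
  have hmapP : ∀ p ∈ P, f p ∈ P := by
    intro p hp
    obtain ⟨x, y⟩ := p
    rw [hPmem] at hp
    obtain ⟨hvx, hvy, hxy⟩ := hp
    obtain ⟨hvx1, hvx2⟩ := (hAdj _ _).mp hvx
    obtain ⟨hvy1, hvy2⟩ := (hAdj _ _).mp hvy
    obtain ⟨hxy1, hxy2⟩ := (hAdj _ _).mp hxy
    show (y - x + v, 2*v - x) ∈ P
    rw [hPmem]
    refine ⟨(hAdj _ _).mpr ⟨?_, ?_⟩, (hAdj _ _).mpr ⟨?_, ?_⟩, (hAdj _ _).mpr ⟨?_, ?_⟩⟩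
    · intro h; exact hxy1 (by linear_combination h)
    · have h : v - (y - x + v) = x - y := by ring
      rw [h]; exact hxy2
    · intro h; exact hvx1 (by linear_combination -h)
    · have h : v - (2*v - x) = -(v - x) := by ring
      rw [h]; exact hneg _ hvx2
    · intro h; exact hvy1 (by linear_combination -h)
    · have h : (y - x + v) - (2*v - x) = -(v - y) := by ring
      rw [h]; exact hneg _ hvy2
  have hcubeP : ∀ p ∈ P, f (f (f p)) = p := by
    intro p _
    obtain ⟨x, y⟩ := p
    show ((2*v - (y - x + v)) - ((2*v - x) - (y - x + v) + v) + v,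
      2*v - ((2*v - x) - (y - x + v) + v)) = (x, y)
    rw [Prod.mk.injEq]
    constructor <;> ring
  -- fixed points
  set F : Finset (ZMod n × ZMod n) := P.filter (fun p => f p = p) with hFdef
  have hmod : P.card % 3 = F.card % 3 := card_modEq_of_triple f P hmapP hcubeP
  have hFprop : ∀ p ∈ F, G.Adj v p.1 ∧ G.Adj v p.2 ∧ G.Adj p.1 p.2 ∧
      p.2 - p.1 + v = p.1 ∧ 2*v - p.1 = p.2 := by
    intro p hp
    rw [hFdef, Finset.mem_filter] at hp
    obtain ⟨hpP, hpf⟩ := hp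
    have h12 : (p.2 - p.1 + v, 2*v - p.1) = p := hpf
    have e1 : p.2 - p.1 + v = p.1 := congrArg Prod.fst h12
    have e2 : 2*v - p.1 = p.2 := congrArg Prod.snd h12
    have hpP' : G.Adj v p.1 ∧ G.Adj v p.2 ∧ G.Adj p.1 p.2 := (hPmem p.1 p.2).mp hpP
    exact ⟨hpP'.1, hpP'.2.1, hpP'.2.2, e1, e2⟩
  -- torsion facts for fixed points
  have h3tor : ∀ p ∈ F, 3*(p.1 - v) = 0 ∧ p.1 - v ≠ 0 := by
    intro p hp
    obtain ⟨hvx, hvy, hxy, e1, e2⟩ := hFprop p hp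
    refine ⟨by linear_combination -e1 - e2, ?_⟩
    have := ((hAdj _ _).mp hvx).1
    exact sub_ne_zero.mpr (fun h => this (by rw [h]))
  -- the 3-torsion of `ZMod n` minus zero has a rigid structure
  have tor : ∀ a b : ZMod n, 3*a = 0 → 3*b = 0 → a ≠ 0 → b ≠ 0 → b = a ∨ b = 2*a := by
    have hval : ∀ c : ZMod n, 3*c = 0 → c ≠ 0 → 3*c.val = n ∨ 3*c.val = 2*n := by
      intro c hc hc0
      have h1 : ((3*c.val : ℕ) : ZMod n) = 0 := by
        push_cast [ZMod.natCast_zmod_val]; exact hc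
      have h2 : n ∣ 3*c.val := (ZMod.natCast_eq_zero_iff _ _).mp h1
      have h3 : c.val ≠ 0 := fun h => hc0 ((ZMod.val_eq_zero c).mp h)
      have h4 : c.val < n := ZMod.val_lt c
      obtain ⟨k, hk⟩ := h2
      have hk3 : k < 3 := by
        by_contra hk3
        push_neg at hk3
        have h5 : n*3 ≤ n*k := Nat.mul_le_mul (le_refl n) hk3
        omega
      interval_cases k <;> omega
    intro a b ha hb ha0 hb0
    rcases hval a ha ha0 with h | h <;> rcases hval b hb hb0 with h' | h'
    · left
      have hv : b.val = a.val := by omega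
      calc b = ((b.val : ℕ) : ZMod n) := (ZMod.natCast_zmod_val b).symm
        _ = ((a.val : ℕ) : ZMod n) := by rw [hv]
        _ = a := ZMod.natCast_zmod_val a
    · right
      have hv : b.val = 2*a.val := by omega
      calc b = ((b.val : ℕ) : ZMod n) := (ZMod.natCast_zmod_val b).symm
        _ = ((2*a.val : ℕ) : ZMod n) := by rw [hv]
        _ = 2*a := by push_cast [ZMod.natCast_zmod_val]; ring
    · right
      have hv : a.val = 2*b.val := by omega
      have ha2b : a = 2*b := by
        calc a = ((a.val : ℕ) : ZMod n) := (ZMod.natCast_zmod_val a).symm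
          _ = ((2*b.val : ℕ) : ZMod n) := by rw [hv]
          _ = 2*b := by push_cast [ZMod.natCast_zmod_val]; ring
      linear_combination -hb - 2*ha2b
    · left
      have hv : b.val = a.val := by omega
      calc b = ((b.val : ℕ) : ZMod n) := (ZMod.natCast_zmod_val b).symm
        _ = ((a.val : ℕ) : ZMod n) := by rw [hv]
        _ = a := ZMod.natCast_zmod_val a
  -- now the final argument
  intro hcon
  have hP3 : P.card % 3 = 1 := by omega
  have hF3 : F.card % 3 = 1 := by omega
  have hFne : 0 < F.card := by omega
  obtain ⟨p₀, hp₀⟩ := Finset.card_pos.mp hFne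
  obtain ⟨h30', hne0'⟩ := h3tor p₀ hp₀
  have hsub : F ⊆ {((p₀.1 - v) + v, 2*v - ((p₀.1 - v) + v)),
      (2*(p₀.1 - v) + v, 2*v - (2*(p₀.1 - v) + v))} := by
    intro p hp
    obtain ⟨h30, hne0⟩ := h3tor p hp
    obtain ⟨_, _, _, e1, e2⟩ := hFprop p hp
    rcases tor (p₀.1 - v) (p.1 - v) h30' h30 hne0' hne0 with h | h
    · refine Finset.mem_insert.mpr (Or.inl ?_)
      exact Prod.ext_iff.mpr ⟨by linear_combination h, by linear_combination -e2 - h⟩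
    · refine Finset.mem_insert.mpr (Or.inr (Finset.mem_singleton.mpr ?_))
      exact Prod.ext_iff.mpr ⟨by linear_combination h, by linear_combination -e2 - h⟩
  have hcard2 : F.card ≤ 2 :=
    le_trans (Finset.card_le_card hsub) (le_trans (Finset.card_insert_le _ _) (by simp))
  have hF1 : F.card = 1 := by omega
  obtain ⟨q, hq⟩ := Finset.card_eq_one.mp hF1
  have hqF : q ∈ F := by rw [hq]; exact Finset.mem_singleton_self q
  obtain ⟨hv1, hv2, h12, he1, he2⟩ := hFprop q hqF
  have hswap : (q.2, q.1) ∈ F := by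
    rw [hFdef, Finset.mem_filter]
    constructor
    · rw [hPmem]; exact ⟨hv2, hv1, h12.symm⟩
    · show ((q.1 - q.2 + v, 2*v - q.2) : ZMod n × ZMod n) = (q.2, q.1)
      rw [Prod.mk.injEq]
      exact ⟨by linear_combination -he1 + he2, by linear_combination he2⟩
  rw [hq, Finset.mem_singleton] at hswap
  exact ((hAdj _ _).mp h12).1 ((congrArg Prod.fst hswap).symm)
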